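/- Let 0 ≤ α < n, 1 < p < n/α and 1/q = 1/p − α/n. The discrete centered fractional maximal operator M_α is bounded from ℓ^p(ℤⁿ) to ℓ^q(ℤⁿ). -/

import Mathlib

open scoped BigOperators ENNReal

noncomputable section

/-- Euclidean norm of an integer vector in `ℤⁿ`. -/
def znorm {n : ℕ} (j : Fin n → ℤ) : ℝ := Real.sqrt (∑ l, ((j l : ℝ)) ^ 2)

/-- `ℓ^∞` norm of an integer vector, as a natural number. -/
def zinf {n : ℕ} (j : Fin n → ℤ) : ℕ := Finset.univ.sup fun l => (j l).natAbs

/-- The discrete cube centered at `k0` with "radius" `m` (side length `2m+1`),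
i.e. `{i : |i - k0|_∞ ≤ m}`. -/
def dcube {n : ℕ} (k0 : Fin n → ℤ) (m : ℕ) : Finset (Fin n → ℤ) :=
  Finset.Icc (fun l => k0 l - m) (fun l => k0 l + m)

/-- The discrete Riesz potential `(I_α b)(j) = ∑_{i ≠ j} b(i) |i-j|^{α-n}`. -/
def rieszPot {n : ℕ} (α : ℝ) (b : (Fin n → ℤ) → ℝ) (j : Fin n → ℤ) : ℝ :=
  ∑' i : {i : Fin n → ℤ // i ≠ j}, b i.1 * znorm (i.1 - j) ^ (α - n)

/-- Embedding of `ℤⁿ` into Euclidean space `ℝⁿ`. -/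
def toE {n : ℕ} (j : Fin n → ℤ) : EuclideanSpace ℝ (Fin n) := WithLp.toLp 2 (fun l => (j l : ℝ))

/-- The discretized dilation `Φ_t^d(j) = t^{-n} Φ(j/t)` for `j ≠ 0`, and `Φ_t^d(0) = 0`. -/
def phid {n : ℕ} (Φ : SchwartzMap (EuclideanSpace ℝ (Fin n)) ℝ) (t : ℝ) (j : Fin n → ℤ) : ℝ :=
  if j = 0 then 0 else t ^ (-(n : ℝ)) * Φ (t⁻¹ • toE j)

/-- Discrete convolution `(b ∗ c)(j) = ∑_i b(i) c(j-i)`. -/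
def dconv {n : ℕ} (b c : (Fin n → ℤ) → ℝ) (j : Fin n → ℤ) : ℝ :=
  ∑' i : Fin n → ℤ, b i * c (j - i)

/-- The maximal function `sup_{t>0} |(Φ_t^d ∗ b)(j)|`, valued in `ℝ≥0∞`. -/
def maxFn {n : ℕ} (Φ : SchwartzMap (EuclideanSpace ℝ (Fin n)) ℝ) (b : (Fin n → ℤ) → ℝ)
    (j : Fin n → ℤ) : ℝ≥0∞ :=
  ⨆ (t : ℝ) (_ : 0 < t), ENNReal.ofReal |dconv (phid Φ t) b j|

/-- The `ℓ^p` quasinorm (`0 < p < ∞`) of a real sequence on `ℤⁿ`, valued in `ℝ≥0∞`. -/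
def elp {n : ℕ} (p : ℝ) (f : (Fin n → ℤ) → ℝ) : ℝ≥0∞ :=
  (∑' j : Fin n → ℤ, ENNReal.ofReal |f j| ^ p) ^ (1 / p)

/-- The `ℓ^p` quasinorm of an `ℝ≥0∞`-valued sequence on `ℤⁿ`. -/
def elpE {n : ℕ} (p : ℝ) (f : (Fin n → ℤ) → ℝ≥0∞) : ℝ≥0∞ :=
  (∑' j : Fin n → ℤ, f j ^ p) ^ (1 / p)

/-- The discrete Hardy space quasinorm `‖b‖_{H^p} = ‖b‖_{ℓ^p} + ‖sup_{t>0}|Φ_t^d ∗ b|‖_{ℓ^p}`. -/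
def hpNorm {n : ℕ} (Φ : SchwartzMap (EuclideanSpace ℝ (Fin n)) ℝ) (p : ℝ)
    (b : (Fin n → ℤ) → ℝ) : ℝ≥0∞ :=
  elp p b + elpE p (maxFn Φ b)

/-- A `(p, ∞, N)`-atom supported in the discrete cube `dcube k0 m`. -/
def IsDiscreteAtom {n : ℕ} (p : ℝ) (N : ℕ) (k0 : Fin n → ℤ) (m : ℕ)
    (a : (Fin n → ℤ) → ℝ) : Prop :=
  (∀ j, j ∉ dcube k0 m → a j = 0) ∧
  (∀ j, |a j| ≤ ((dcube k0 m).card : ℝ) ^ (-(1 / p))) ∧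
  (∀ β : Fin n → ℕ, (∑ l, β l) ≤ N →
    ∑ j ∈ dcube k0 m, (∏ l, ((j l : ℝ)) ^ β l) * a j = 0)

/-- The centered discrete fractional maximal operator
`(M_α b)(j) = sup_m (#Q_{j,m})^{α/n - 1} ∑_{i ∈ Q_{j,m}} |b(i)|`. -/
def fracMax {n : ℕ} (α : ℝ) (b : (Fin n → ℤ) → ℝ) (j : Fin n → ℤ) : ℝ≥0∞ :=
  ⨆ m : ℕ, ENNReal.ofReal
    ((((dcube j m).card : ℝ) ^ (α / n - 1)) * ∑ i ∈ dcube j m, |b i|)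

/-- The Taylor polynomial of degree `N - 1` of `f` centered at `c`, evaluated at `x`. -/
def taylorPoly {n : ℕ} (f : EuclideanSpace ℝ (Fin n) → ℝ) (c x : EuclideanSpace ℝ (Fin n))
    (N : ℕ) : ℝ :=
  ∑ r ∈ Finset.range N, (1 / r.factorial : ℝ) * iteratedFDeriv ℝ r f c (fun _ => x - c)


section AuxStmt10

variable {n : ℕ}

lemma mem_dcube {k0 i : Fin n → ℤ} {m : ℕ} :
    i ∈ dcube k0 m ↔ ∀ l, k0 l - m ≤ i l ∧ i l ≤ k0 l + m := by
  simp [dcube, Finset.mem_Icc, Pi.le_def, forall_and]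

lemma card_dcube (k0 : Fin n → ℤ) (m : ℕ) : (dcube k0 m).card = (2 * m + 1) ^ n := by
  rw [dcube, Pi.card_Icc]
  have : ∀ l : Fin n, (Finset.Icc (k0 l - m) (k0 l + m)).card = 2 * m + 1 := by
    intro l
    rw [Int.card_Icc]
    have : (k0 l + m + 1 - (k0 l - m)) = (2 * m + 1 : ℤ) := by ring
    rw [this]
    omega
  simp [this, Finset.prod_const, Finset.card_univ]

lemma self_mem_dcube (k0 : Fin n → ℤ) (m : ℕ) : k0 ∈ dcube k0 m := by
  rw [mem_dcube]; intro l; omega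

lemma dcube_card_pos (k0 : Fin n → ℤ) (m : ℕ) : 0 < (dcube k0 m).card :=
  Finset.card_pos.2 ⟨k0, self_mem_dcube k0 m⟩

open Classical in
/-- Vitali-type covering bound for finite families of centered discrete cubes. -/
lemma weak_finset (t : ℝ≥0∞) (m : (Fin n → ℤ) → ℕ) :
    ∀ k : ℕ, ∀ F : Finset (Fin n → ℤ), F.card ≤ k → ∀ c : (Fin n → ℤ) → ℝ≥0∞,
    (∀ j ∈ F, ((dcube j (m j)).card : ℝ≥0∞) * t < ∑ i ∈ dcube j (m j), c i) →
    (F.card : ℝ≥0∞) * t ≤ 3 ^ n * ∑' i, c i := by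
  intro k
  induction k with
  | zero =>
    intro F hF c _
    rw [Nat.le_zero, Finset.card_eq_zero] at hF
    simp [hF]
  | succ k ih =>
    intro F hF c hc
    rcases F.eq_empty_or_nonempty with rfl | hFne
    · simp
    obtain ⟨j1, hj1F, hj1max⟩ := F.exists_max_image m hFne
    set Q1 := dcube j1 (m j1) with hQ1
    set F' := F.filter (fun j => ∀ i ∈ dcube j (m j), i ∉ Q1) with hF'
    have hF'sub : F' ⊆ F := Finset.filter_subset _ _
    have hj1notF' : j1 ∉ F' := by
      intro h
      exact (Finset.mem_filter.1 h).2 j1 (self_mem_dcube _ _) (self_mem_dcube _ _)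
    have hF'card : F'.card ≤ k := by
      have : F' ⊆ F.erase j1 := fun x hx =>
        Finset.mem_erase.2 ⟨fun h => hj1notF' (h ▸ hx), hF'sub hx⟩
      calc F'.card ≤ (F.erase j1).card := Finset.card_le_card this
        _ = F.card - 1 := Finset.card_erase_of_mem hj1F
        _ ≤ k := by omega
    -- the discarded cubes: centers lie in the tripled cube
    have hdiscard : F \ F' ⊆ dcube j1 (2 * m j1) := by
      intro j hj
      rcases Finset.mem_sdiff.1 hj with ⟨hjF, hjF'⟩
      have : ¬ (∀ i ∈ dcube j (m j), i ∉ Q1) := by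
        intro h; exact hjF' (Finset.mem_filter.2 ⟨hjF, h⟩)
      push_neg at this
      obtain ⟨i, hi1, hi2⟩ := this
      rw [mem_dcube] at hi1 hi2 ⊢
      intro l
      have h1 := hi1 l
      have h2 := hi2 l
      have hm : m j ≤ m j1 := hj1max j hjF
      push_cast
      push_cast at h1 h2
      constructor <;> nlinarith [h1.1, h1.2, h2.1, h2.2, (Nat.cast_le (α := ℤ)).2 hm]
    have hdiscard_card : (F \ F').card ≤ 3 ^ n * Q1.card := by
      calc (F \ F').card ≤ (dcube j1 (2 * m j1)).card := Finset.card_le_card hdiscard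
        _ = (2 * (2 * m j1) + 1) ^ n := card_dcube _ _
        _ ≤ (3 * (2 * m j1 + 1)) ^ n := Nat.pow_le_pow_left (by omega) n
        _ = 3 ^ n * (2 * m j1 + 1) ^ n := mul_pow 3 _ n
        _ = 3 ^ n * Q1.card := by rw [card_dcube]
    -- new sequence vanishing on Q1
    set c' : (Fin n → ℤ) → ℝ≥0∞ := fun i => if i ∈ Q1 then 0 else c i with hc'
    have hc'le : ∀ j ∈ F', ((dcube j (m j)).card : ℝ≥0∞) * t < ∑ i ∈ dcube j (m j), c' i := by
      intro j hj
      have hdisj := (Finset.mem_filter.1 hj).2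
      have : ∑ i ∈ dcube j (m j), c' i = ∑ i ∈ dcube j (m j), c i :=
        Finset.sum_congr rfl fun i hi => by simp [hc', hdisj i hi]
      rw [this]
      exact hc j (hF'sub hj)
    have hIH := ih F' hF'card c' hc'le
    have hsplit : ∑' i, c i = (∑' i, c' i) + ∑ i ∈ Q1, c i := by
      have h1 : ∀ i, c i = c' i + (if i ∈ Q1 then c i else 0) := by
        intro i; by_cases h : i ∈ Q1 <;> simp [hc', h]
      calc ∑' i, c i = ∑' i, (c' i + if i ∈ Q1 then c i else 0) := by
            exact tsum_congr h1
        _ = (∑' i, c' i) + ∑' i, (if i ∈ Q1 then c i else 0) := ENNReal.tsum_add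
        _ = (∑' i, c' i) + ∑ i ∈ Q1, c i := by
            congr 1
            rw [tsum_eq_sum (s := Q1) (fun i hi => if_neg hi)]
            exact Finset.sum_congr rfl fun i hi => if_pos hi
    have hcards : (F.card : ℝ≥0∞) = (F'.card : ℝ≥0∞) + ((F \ F').card : ℝ≥0∞) := by
      rw [← Nat.cast_add]
      norm_cast
      have := Finset.card_sdiff_add_card_eq_card hF'sub
      omega
    have hmid : ((F \ F').card : ℝ≥0∞) * t ≤ 3 ^ n * ((Q1.card : ℝ≥0∞) * t) := by
      have h1 : ((F \ F').card : ℝ≥0∞) ≤ (3 ^ n * Q1.card : ℕ) := by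
        exact_mod_cast Nat.cast_le.2 hdiscard_card
      calc ((F \ F').card : ℝ≥0∞) * t ≤ ((3 ^ n * Q1.card : ℕ) : ℝ≥0∞) * t :=
            mul_le_mul_left h1 t
        _ = 3 ^ n * ((Q1.card : ℝ≥0∞) * t) := by push_cast; ring
    calc (F.card : ℝ≥0∞) * t = (F'.card : ℝ≥0∞) * t + ((F \ F').card : ℝ≥0∞) * t := by
          rw [hcards, add_mul]
      _ ≤ 3 ^ n * (∑' i, c' i) + 3 ^ n * ((Q1.card : ℝ≥0∞) * t) := add_le_add hIH hmid
      _ ≤ 3 ^ n * (∑' i, c' i) + 3 ^ n * ∑ i ∈ Q1, c i :=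
          add_le_add_right (mul_le_mul_right (le_of_lt (hc j1 hj1F)) _) _
      _ = 3 ^ n * ∑' i, c i := by rw [hsplit, mul_add]

lemma term_eq (α : ℝ) (c : (Fin n → ℤ) → ℝ) (j : Fin n → ℤ) (m : ℕ) :
    ENNReal.ofReal ((((dcube j m).card : ℝ)) ^ (α / n - 1) * ∑ i ∈ dcube j m, |c i|)
      = ((dcube j m).card : ℝ≥0∞) ^ (α / n - 1) * ∑ i ∈ dcube j m, ENNReal.ofReal |c i| := by
  have hpos : (0:ℝ) < ((dcube j m).card : ℝ) := by exact_mod_cast dcube_card_pos j m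
  rw [ENNReal.ofReal_mul (Real.rpow_nonneg hpos.le _),
    ← ENNReal.ofReal_rpow_of_pos hpos, ENNReal.ofReal_natCast,
    ENNReal.ofReal_sum_of_nonneg (fun i _ => abs_nonneg _)]

open Classical in
lemma weak_type (t : ℝ≥0∞) (c : (Fin n → ℤ) → ℝ) :
    (∑' j : Fin n → ℤ, if t < fracMax 0 c j then (1:ℝ≥0∞) else 0) * t
      ≤ 3 ^ n * ∑' i : Fin n → ℤ, ENNReal.ofReal |c i| := by
  have key : ∀ j : Fin n → ℤ, t < fracMax 0 c j →
      ∃ m : ℕ, ((dcube j m).card : ℝ≥0∞) * t < ∑ i ∈ dcube j m, ENNReal.ofReal |c i| := by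
    intro j hj
    rw [fracMax, lt_iSup_iff] at hj
    obtain ⟨m, hm⟩ := hj
    refine ⟨m, ?_⟩
    rw [term_eq] at hm
    have hcard0 : ((dcube j m).card : ℝ≥0∞) ≠ 0 := by
      exact_mod_cast (dcube_card_pos j m).ne'
    have hcardtop : ((dcube j m).card : ℝ≥0∞) ≠ ∞ := ENNReal.natCast_ne_top _
    have hexp : ((0:ℝ) / n - 1) = (-1 : ℝ) := by simp
    rw [hexp, ENNReal.rpow_neg_one] at hm
    calc ((dcube j m).card : ℝ≥0∞) * t
        < ((dcube j m).card : ℝ≥0∞) * (((dcube j m).card : ℝ≥0∞)⁻¹ *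
            ∑ i ∈ dcube j m, ENNReal.ofReal |c i|) := by
          rw [ENNReal.mul_lt_mul_iff_right hcard0 hcardtop]; exact hm
      _ = ∑ i ∈ dcube j m, ENNReal.ofReal |c i| := by
          rw [← mul_assoc, ENNReal.mul_inv_cancel hcard0 hcardtop, one_mul]
  set m : (Fin n → ℤ) → ℕ := fun j =>
    if h : t < fracMax 0 c j then (key j h).choose else 0 with hm
  rw [ENNReal.tsum_eq_iSup_sum, ENNReal.iSup_mul]
  refine iSup_le fun F => ?_
  have hsum : (∑ j ∈ F, if t < fracMax 0 c j then (1:ℝ≥0∞) else 0)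
      = ((F.filter (fun j => t < fracMax 0 c j)).card : ℝ≥0∞) := by
    rw [Finset.card_filter]
    push_cast
    exact Finset.sum_congr rfl fun j _ => by by_cases h : t < fracMax 0 c j <;> simp [h]
  rw [hsum]
  refine weak_finset t m (F.filter _).card _ le_rfl _ fun j hj => ?_
  have hjt : t < fracMax 0 c j := (Finset.mem_filter.1 hj).2
  have := (key j hjt).choose_spec
  simpa only [hm, dif_pos hjt] using this

open MeasureTheory in
lemma holder_cube {n : ℕ} (p : ℝ) (hp : 1 < p) (f : (Fin n → ℤ) → ℝ≥0∞)
    (Q : Finset (Fin n → ℤ)) :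
    ∑ i ∈ Q, f i ≤ (∑ i ∈ Q, f i ^ p) ^ (1/p) * (Q.card : ℝ≥0∞) ^ (1 - 1/p) := by
  classical
  have hp0 : (0:ℝ) < p := lt_trans one_pos hp
  set q : ℝ := p / (p - 1) with hqdef
  have hpq : p.HolderConjugate q := Real.HolderConjugate.conjExponent hp
  set F : (Fin n → ℤ) → ℝ≥0∞ := fun i => if i ∈ Q then f i else 0 with hF
  set G : (Fin n → ℤ) → ℝ≥0∞ := fun i => if i ∈ Q then 1 else 0 with hG
  have hFm : AEMeasurable F (Measure.count) := (measurable_of_countable F).aemeasurable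
  have hGm : AEMeasurable G (Measure.count) := (measurable_of_countable G).aemeasurable
  have key := ENNReal.lintegral_mul_le_Lp_mul_Lq (Measure.count) hpq hFm hGm
  rw [lintegral_count] at key
  have h1 : ∑' i, F i * G i = ∑ i ∈ Q, f i := by
    rw [tsum_eq_sum (s := Q) (fun i hi => by simp [hF, hG, hi])]
    exact Finset.sum_congr rfl fun i hi => by simp [hF, hG, hi]
  have h2 : ∫⁻ i, F i ^ p ∂Measure.count = ∑ i ∈ Q, f i ^ p := by
    rw [lintegral_count, tsum_eq_sum (s := Q)
      (fun i hi => by simp [hF, hi, ENNReal.zero_rpow_of_pos hp0])]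
    exact Finset.sum_congr rfl fun i hi => by simp [hF, hi]
  have h3 : ∫⁻ i, G i ^ q ∂Measure.count = (Q.card : ℝ≥0∞) := by
    rw [lintegral_count, tsum_eq_sum (s := Q)
      (fun i hi => by simp [hG, hi, ENNReal.zero_rpow_of_pos hpq.symm.pos])]
    have : ∀ i ∈ Q, G i ^ q = 1 := fun i hi => by simp [hG, hi]
    rw [Finset.sum_congr rfl this]
    simp
  simp only [Pi.mul_apply] at key
  rw [h1, h2, h3] at key
  have hq1 : 1/q = 1 - 1/p := by
    have := hpq.inv_add_inv_eq_one
    rw [one_div, one_div]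
    linarith
  rwa [hq1] at key

/-- pointwise interpolation bound -/
lemma pointwise_interp (α p q : ℝ) (hn : (0:ℝ) < n) (hα : 0 ≤ α) (hp : 1 < p)
    (hpn : α * p < n) (hq : 1 / q = 1 / p - α / n) (b : (Fin n → ℤ) → ℝ) (j : Fin n → ℤ) :
    fracMax α b j ≤ (fracMax 0 b j) ^ (p / q) *
      (∑' i : Fin n → ℤ, ENNReal.ofReal |b i| ^ p) ^ ((1/p) * (1 - p/q)) := by
  have hp0 : (0:ℝ) < p := lt_trans one_pos hp
  have hq0 : (0:ℝ) < 1/q := by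
    rw [hq, sub_pos, div_lt_div_iff₀ hn hp0]; linarith
  set θ : ℝ := 1 - α * p / n with hθdef
  have hpqθ : p / q = θ := by
    have : p / q = p * (1/q) := by ring
    rw [this, hq, hθdef]; field_simp
  have hθpos : 0 < θ := by
    rw [hθdef, sub_pos, div_lt_one hn]; exact hpn
  have hθle : θ ≤ 1 := by
    rw [hθdef]; have : 0 ≤ α * p / n := by positivity
    linarith
  set N : ℝ≥0∞ := ∑' i : Fin n → ℤ, ENNReal.ofReal |b i| ^ p with hN
  rw [hpqθ]
  by_cases hθ1 : θ = 1
  · -- then α = 0 and the inequality is trivial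
    have hα0 : α = 0 := by
      rw [hθdef] at hθ1
      have : α * p / n = 0 := by linarith
      rcases mul_eq_zero.1 ((div_eq_zero_iff.1 this).resolve_right hn.ne') with h | h
      · exact h
      · exact absurd h hp0.ne'
    rw [hα0, hθ1, ENNReal.rpow_one]
    simp
  have hθlt : θ < 1 := lt_of_le_of_ne hθle hθ1
  refine iSup_le fun m => ?_
  rw [term_eq]
  set C : ℝ≥0∞ := ((dcube j m).card : ℝ≥0∞) with hC
  have hC0 : C ≠ 0 := by
    rw [hC]; exact_mod_cast (dcube_card_pos j m).ne'
  have hCtop : C ≠ ∞ := ENNReal.natCast_ne_top _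
  set SE : ℝ≥0∞ := ∑ i ∈ dcube j m, ENNReal.ofReal |b i| with hSE
  have hfm : C⁻¹ * SE ≤ fracMax 0 b j := by
    have h := le_iSup (fun m => ENNReal.ofReal
      ((((dcube j m).card : ℝ) ^ ((0:ℝ) / n - 1)) * ∑ i ∈ dcube j m, |b i|)) m
    refine le_trans (le_of_eq ?_) h
    rw [term_eq, show ((0:ℝ)/(n:ℝ) - 1) = (-1:ℝ) from by simp, ENNReal.rpow_neg_one]
  by_cases hSE0 : SE = 0
  · rw [hSE0, mul_zero]; exact zero_le
  have hSEtop : SE ≠ ∞ := by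
    rw [hSE]
    exact (ENNReal.sum_lt_top.mpr (fun i _ => ENNReal.ofReal_lt_top)).ne
  by_cases hNtop : N = ∞
  · -- RHS is infinite
    have h1 : (fracMax 0 b j) ^ θ ≠ 0 := by
      intro h
      rw [ENNReal.rpow_eq_zero_iff] at h
      rcases h with ⟨h, _⟩ | ⟨_, h⟩
      · have : C⁻¹ * SE = 0 := le_antisymm (h ▸ hfm) (zero_le)
        rcases mul_eq_zero.1 this with h' | h'
        · exact (ENNReal.inv_ne_zero.2 hCtop) h'
        · exact hSE0 h'
      · linarith
    have h2 : N ^ ((1/p) * (1 - θ)) = ∞ := by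
      rw [hNtop]
      exact ENNReal.top_rpow_of_pos (mul_pos (one_div_pos.2 hp0) (by linarith))
    rw [h2, ENNReal.mul_top h1]
    exact le_top
  -- main case
  have hee : α/(n:ℝ) - 1 = (-1)*θ + (1/p - 1)*(1-θ) := by
    rw [hθdef]; field_simp; ring
  have hHolder : C ^ (1/p - 1) * SE ≤ N ^ (1/p) := by
    have h1 : SE ≤ N ^ (1/p) * C ^ (1 - 1/p) := by
      calc SE ≤ (∑ i ∈ dcube j m, ENNReal.ofReal |b i| ^ p) ^ (1/p) * C ^ (1 - 1/p) :=
            holder_cube p hp _ _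
        _ ≤ N ^ (1/p) * C ^ (1 - 1/p) :=
            mul_le_mul_left (ENNReal.rpow_le_rpow (ENNReal.sum_le_tsum _)
              (one_div_nonneg.2 hp0.le)) _
    calc C ^ (1/p - 1) * SE ≤ C ^ (1/p - 1) * (N ^ (1/p) * C ^ (1 - 1/p)) := by gcongr
      _ = N ^ (1/p) * (C ^ (1/p - 1) * C ^ (1 - 1/p)) := by ring
      _ = N ^ (1/p) := by
          rw [← ENNReal.rpow_add _ _ hC0 hCtop]
          norm_num
  have hCsplit : C ^ (α/(n:ℝ) - 1) = C⁻¹ ^ θ * (C ^ ((1:ℝ)/p - 1)) ^ (1-θ) := by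
    rw [hee, ENNReal.rpow_add _ _ hC0 hCtop, ENNReal.rpow_mul C (-1) θ,
      ENNReal.rpow_mul C (1/p - 1) (1-θ), ENNReal.rpow_neg_one]
  have hSEsplit : SE = SE ^ θ * SE ^ (1-θ) := by
    rw [← ENNReal.rpow_add _ _ hSE0 hSEtop]; norm_num
  calc C ^ (α/(n:ℝ) - 1) * SE
      = (C⁻¹ ^ θ * (C ^ ((1:ℝ)/p - 1)) ^ (1-θ)) * (SE ^ θ * SE ^ (1-θ)) := by
        rw [hCsplit]; conv_lhs => rw [hSEsplit]
    _ = (C⁻¹ * SE) ^ θ * ((C ^ ((1:ℝ)/p - 1) * SE)) ^ (1 - θ) := by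
        rw [ENNReal.mul_rpow_of_nonneg _ _ hθpos.le,
          ENNReal.mul_rpow_of_nonneg _ _ (by linarith : (0:ℝ) ≤ 1 - θ)]
        ring
    _ ≤ (fracMax 0 b j) ^ θ * (N ^ ((1:ℝ)/p)) ^ (1 - θ) := by
        gcongr
    _ = (fracMax 0 b j) ^ θ * N ^ ((1/p) * (1 - θ)) := by
        rw [← ENNReal.rpow_mul]

lemma le_fracMax_zero (c : (Fin n → ℤ) → ℝ) (j : Fin n → ℤ) (m : ℕ) :
    ((dcube j m).card : ℝ≥0∞)⁻¹ * ∑ i ∈ dcube j m, ENNReal.ofReal |c i|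
      ≤ fracMax 0 c j := by
  have h := le_iSup (fun m => ENNReal.ofReal
    ((((dcube j m).card : ℝ) ^ ((0:ℝ) / n - 1)) * ∑ i ∈ dcube j m, |c i|)) m
  refine le_trans (le_of_eq ?_) h
  rw [term_eq, show ((0:ℝ)/(n:ℝ) - 1) = (-1:ℝ) from by simp, ENNReal.rpow_neg_one]

lemma g_le (p : ℝ) (hp : 1 < p) (b : (Fin n → ℤ) → ℝ) (j : Fin n → ℤ) :
    fracMax 0 b j ≤ (∑' i : Fin n → ℤ, ENNReal.ofReal |b i| ^ p) ^ (1/p) := by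
  have hp0 : (0:ℝ) < p := lt_trans one_pos hp
  set N := ∑' i : Fin n → ℤ, ENNReal.ofReal |b i| ^ p with hN
  refine iSup_le fun m => ?_
  rw [term_eq, show ((0:ℝ)/(n:ℝ) - 1) = (-1:ℝ) from by simp, ENNReal.rpow_neg_one]
  set C : ℝ≥0∞ := ((dcube j m).card : ℝ≥0∞) with hC
  have hC0 : C ≠ 0 := by rw [hC]; exact_mod_cast (dcube_card_pos j m).ne'
  have hCtop : C ≠ ∞ := ENNReal.natCast_ne_top _
  have hC1 : 1 ≤ C := by
    rw [hC]; exact_mod_cast Nat.one_le_cast.2 (dcube_card_pos j m)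
  calc C⁻¹ * ∑ i ∈ dcube j m, ENNReal.ofReal |b i|
      ≤ C⁻¹ * (N ^ (1/p) * C ^ (1 - 1/p)) := by
        gcongr
        calc ∑ i ∈ dcube j m, ENNReal.ofReal |b i|
            ≤ (∑ i ∈ dcube j m, ENNReal.ofReal |b i| ^ p) ^ (1/p) * C ^ (1 - 1/p) :=
              holder_cube p hp _ _
          _ ≤ N ^ (1/p) * C ^ (1 - 1/p) :=
              mul_le_mul_left (ENNReal.rpow_le_rpow (ENNReal.sum_le_tsum _)
                (one_div_nonneg.2 hp0.le)) _
    _ = N ^ (1/p) * (C ^ (-1 : ℝ) * C ^ (1 - 1/p)) := by rw [ENNReal.rpow_neg_one]; ring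
    _ = N ^ (1/p) * C ^ (-(1/p)) := by
        rw [← ENNReal.rpow_add _ _ hC0 hCtop]; norm_num; ring_nf
    _ ≤ N ^ (1/p) * 1 := by
        gcongr
        calc C ^ (-(1/p)) ≤ C ^ (0:ℝ) :=
              ENNReal.rpow_le_rpow_of_exponent_le hC1
                (neg_nonpos.2 (one_div_nonneg.2 hp0.le))
          _ = 1 := ENNReal.rpow_zero
    _ = N ^ (1/p) := mul_one _

lemma split_est (b : (Fin n → ℤ) → ℝ) (s : ℝ≥0∞) (j : Fin n → ℤ) :
    fracMax 0 b j ≤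
      fracMax 0 (fun i => if s < ENNReal.ofReal |b i| then b i else 0) j + s := by
  set c : (Fin n → ℤ) → ℝ := fun i => if s < ENNReal.ofReal |b i| then b i else 0 with hc
  refine iSup_le fun m => ?_
  rw [term_eq, show ((0:ℝ)/(n:ℝ) - 1) = (-1:ℝ) from by simp, ENNReal.rpow_neg_one]
  set C : ℝ≥0∞ := ((dcube j m).card : ℝ≥0∞) with hC
  have hC0 : C ≠ 0 := by rw [hC]; exact_mod_cast (dcube_card_pos j m).ne'
  have hCtop : C ≠ ∞ := ENNReal.natCast_ne_top _
  have hpt : ∀ i, ENNReal.ofReal |b i| ≤ ENNReal.ofReal |c i| + s := by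
    intro i
    by_cases h : s < ENNReal.ofReal |b i|
    · simp [hc, h]
    · push_neg at h
      calc ENNReal.ofReal |b i| ≤ s := h
        _ ≤ ENNReal.ofReal |c i| + s := le_add_self
  calc C⁻¹ * ∑ i ∈ dcube j m, ENNReal.ofReal |b i|
      ≤ C⁻¹ * ∑ i ∈ dcube j m, (ENNReal.ofReal |c i| + s) := by
        exact mul_le_mul_right (Finset.sum_le_sum fun i _ => hpt i) _
    _ = C⁻¹ * ((∑ i ∈ dcube j m, ENNReal.ofReal |c i|) + C * s) := by
        rw [Finset.sum_add_distrib, Finset.sum_const, nsmul_eq_mul, hC]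
    _ = C⁻¹ * (∑ i ∈ dcube j m, ENNReal.ofReal |c i|) + C⁻¹ * (C * s) := mul_add _ _ _
    _ = C⁻¹ * (∑ i ∈ dcube j m, ENNReal.ofReal |c i|) + s := by
        rw [← mul_assoc, ENNReal.inv_mul_cancel hC0 hCtop, one_mul]
    _ ≤ fracMax 0 c j + s := add_le_add_left (le_fracMax_zero c j m) s

lemma pw_add' (a b : ℤ) : (2:ℝ≥0∞) ^ (a + b) = (2:ℝ≥0∞) ^ a * (2:ℝ≥0∞) ^ b := by
  rw [← ENNReal.rpow_intCast, ← ENNReal.rpow_intCast, ← ENNReal.rpow_intCast,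
    ← ENNReal.rpow_add _ _ two_ne_zero ENNReal.ofNat_ne_top]
  push_cast
  ring_nf

lemma pw_pos (k : ℤ) : (0:ℝ≥0∞) < 2 ^ k := ENNReal.zpow_pos two_ne_zero ENNReal.ofNat_ne_top k

lemma pw_ne_top (k : ℤ) : (2:ℝ≥0∞) ^ k ≠ ∞ :=
  (ENNReal.zpow_lt_top two_ne_zero ENNReal.ofNat_ne_top k).ne

lemma pw_mono {a b : ℤ} (h : a ≤ b) : (2:ℝ≥0∞) ^ a ≤ (2:ℝ≥0∞) ^ b :=
  ENNReal.zpow_le_of_le one_le_two h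

lemma pw_lt_of_lt {a b : ℤ} (h : a < b) : (2:ℝ≥0∞) ^ a < (2:ℝ≥0∞) ^ b := by
  calc (2:ℝ≥0∞) ^ a < (2:ℝ≥0∞) ^ a * 2 := by
        conv_lhs => rw [← mul_one ((2:ℝ≥0∞) ^ a)]
        exact (ENNReal.mul_lt_mul_iff_right (pw_pos a).ne' (pw_ne_top a)).2 ENNReal.one_lt_two
    _ = (2:ℝ≥0∞) ^ (a + 1) := by rw [pw_add', zpow_one]
    _ ≤ (2:ℝ≥0∞) ^ b := pw_mono (by omega)

lemma lt_of_pw_lt {a b : ℤ} (h : (2:ℝ≥0∞) ^ a < (2:ℝ≥0∞) ^ b) : a < b := by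
  by_contra hab
  exact absurd (pw_mono (by omega : b ≤ a)) (not_le.2 h)

/-- Strong `ℓ^p` bound for the discrete centered Hardy–Littlewood maximal operator. -/
lemma strong_type (p : ℝ) (hp : 1 < p) (b : (Fin n → ℤ) → ℝ)
    (hNtop : (∑' i : Fin n → ℤ, ENNReal.ofReal |b i| ^ p) ≠ ∞) :
    ∑' j : Fin n → ℤ, (fracMax 0 b j) ^ p
      ≤ (3 ^ n * (2:ℝ≥0∞) ^ (3*p) * (1 - (2:ℝ≥0∞) ^ (1-p))⁻¹)
          * ∑' i : Fin n → ℤ, ENNReal.ofReal |b i| ^ p := by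
  classical
  have hp0 : (0:ℝ) < p := lt_trans one_pos hp
  set B : (Fin n → ℤ) → ℝ≥0∞ := fun i => ENNReal.ofReal |b i| with hB
  set N := ∑' i : Fin n → ℤ, B i ^ p with hN
  set g : (Fin n → ℤ) → ℝ≥0∞ := fun j => fracMax 0 b j with hg
  have hgtop : ∀ j, g j ≠ ∞ := by
    intro j
    refine ne_top_of_le_ne_top ?_ (g_le p hp b j)
    exact ENNReal.rpow_ne_top_of_nonneg (one_div_nonneg.2 hp0.le) hNtop
  -- the "big part" of b at scale k
  set bigb : ℤ → (Fin n → ℤ) → ℝ := fun k i => if (2:ℝ≥0∞) ^ (k-2) < B i then b i else 0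
    with hbigb
  have hbigB : ∀ k i, ENNReal.ofReal |bigb k i| = if (2:ℝ≥0∞) ^ (k-2) < B i then B i else 0 := by
    intro k i
    by_cases h : (2:ℝ≥0∞) ^ (k-2) < B i <;> simp only [hB] at h <;> simp [hbigb, hB, h]
  -- distribution function at dyadic scales
  set d : ℤ → ℝ≥0∞ := fun k => ∑' j : Fin n → ℤ, if (2:ℝ≥0∞) ^ (k-1) < g j then (1:ℝ≥0∞) else 0
    with hd
  -- Step 1 : dyadic layer cake
  have step1 : ∑' j : Fin n → ℤ, g j ^ p ≤ ∑' k : ℤ, ((2:ℝ≥0∞) ^ (k+1)) ^ p * d k := by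
    have hpt : ∀ j, g j ^ p ≤ ∑' k : ℤ,
        (if (2:ℝ≥0∞) ^ k ≤ g j ∧ g j < (2:ℝ≥0∞) ^ (k+1) then ((2:ℝ≥0∞) ^ (k+1)) ^ p else 0) := by
      intro j
      by_cases hj0 : g j = 0
      · rw [hj0, ENNReal.zero_rpow_of_pos hp0]; exact zero_le
      obtain ⟨k, hk1, hk2⟩ := ENNReal.exists_mem_Ico_zpow hj0 (hgtop j) ENNReal.one_lt_two
        ENNReal.ofNat_ne_top
      calc g j ^ p ≤ ((2:ℝ≥0∞) ^ (k+1)) ^ p := by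
            exact ENNReal.rpow_le_rpow hk2.le hp0.le
        _ = (if (2:ℝ≥0∞) ^ k ≤ g j ∧ g j < (2:ℝ≥0∞) ^ (k+1)
              then ((2:ℝ≥0∞) ^ (k+1)) ^ p else 0) := by rw [if_pos ⟨hk1, hk2⟩]
        _ ≤ _ := ENNReal.le_tsum k
    calc ∑' j : Fin n → ℤ, g j ^ p ≤ ∑' j : Fin n → ℤ, ∑' k : ℤ,
          (if (2:ℝ≥0∞) ^ k ≤ g j ∧ g j < (2:ℝ≥0∞) ^ (k+1)
            then ((2:ℝ≥0∞) ^ (k+1)) ^ p else 0) := ENNReal.tsum_le_tsum hpt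
      _ = ∑' k : ℤ, ∑' j : Fin n → ℤ,
          (if (2:ℝ≥0∞) ^ k ≤ g j ∧ g j < (2:ℝ≥0∞) ^ (k+1)
            then ((2:ℝ≥0∞) ^ (k+1)) ^ p else 0) := ENNReal.tsum_comm
      _ ≤ ∑' k : ℤ, ((2:ℝ≥0∞) ^ (k+1)) ^ p * d k := by
          refine ENNReal.tsum_le_tsum fun k => ?_
          have hmul : ∑' (j : Fin n → ℤ), ((2:ℝ≥0∞) ^ (k+1)) ^ p *
              (if (2:ℝ≥0∞) ^ (k-1) < g j then (1:ℝ≥0∞) else 0)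
              = ((2:ℝ≥0∞) ^ (k+1)) ^ p * d k := ENNReal.tsum_mul_left
          rw [← hmul]
          refine ENNReal.tsum_le_tsum fun j => ?_
          by_cases h : (2:ℝ≥0∞) ^ k ≤ g j ∧ g j < (2:ℝ≥0∞) ^ (k+1)
          · rw [if_pos h, if_pos (lt_of_lt_of_le (pw_lt_of_lt (by omega)) h.1), mul_one]
          · rw [if_neg h]; exact zero_le
  -- Step 2 : weak type estimate at each scale
  have step2 : ∀ k : ℤ, d k ≤ (2:ℝ≥0∞) ^ (2-k) * (3 ^ n *
      ∑' i : Fin n → ℤ, (if (2:ℝ≥0∞) ^ (k-2) < B i then B i else 0)) := by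
    intro k
    have hind : ∀ j, (if (2:ℝ≥0∞) ^ (k-1) < g j then (1:ℝ≥0∞) else 0)
        ≤ (if (2:ℝ≥0∞) ^ (k-2) < fracMax 0 (bigb k) j then (1:ℝ≥0∞) else 0) := by
      intro j
      by_cases h : (2:ℝ≥0∞) ^ (k-1) < g j
      · rw [if_pos h, if_pos]
        by_contra hc
        push_neg at hc
        have := split_est b ((2:ℝ≥0∞) ^ (k-2)) j
        rw [hg] at h
        have hle : fracMax 0 b j ≤ (2:ℝ≥0∞) ^ (k-2) + (2:ℝ≥0∞) ^ (k-2) :=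
          le_trans this (add_le_add_left hc _)
        have heq : (2:ℝ≥0∞) ^ (k-2) + (2:ℝ≥0∞) ^ (k-2) = (2:ℝ≥0∞) ^ (k-1) := by
          rw [← two_mul, show k-1 = 1 + (k-2) by omega, pw_add', zpow_one]
        rw [heq] at hle
        exact absurd hle (not_le.2 h)
      · rw [if_neg h]; exact zero_le
    have hd' := weak_type (n := n) ((2:ℝ≥0∞) ^ (k-2)) (bigb k)
    have hdle : d k ≤ ∑' j : Fin n → ℤ,
        (if (2:ℝ≥0∞) ^ (k-2) < fracMax 0 (bigb k) j then (1:ℝ≥0∞) else 0) :=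
      ENNReal.tsum_le_tsum hind
    have h2 : d k * (2:ℝ≥0∞) ^ (k-2) ≤ 3 ^ n *
        ∑' i : Fin n → ℤ, (if (2:ℝ≥0∞) ^ (k-2) < B i then B i else 0) := by
      refine le_trans (mul_le_mul_left hdle _) ?_
      calc (∑' j : Fin n → ℤ, (if (2:ℝ≥0∞) ^ (k-2) < fracMax 0 (bigb k) j then (1:ℝ≥0∞) else 0))
            * (2:ℝ≥0∞) ^ (k-2)
          ≤ 3 ^ n * ∑' i : Fin n → ℤ, ENNReal.ofReal |bigb k i| := hd'
        _ = 3 ^ n * ∑' i : Fin n → ℤ, (if (2:ℝ≥0∞) ^ (k-2) < B i then B i else 0) := by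
            congr 1
            exact tsum_congr fun i => hbigB k i
    calc d k = d k * ((2:ℝ≥0∞) ^ (k-2) * (2:ℝ≥0∞) ^ (2-k)) := by
          rw [← pw_add', show k - 2 + (2 - k) = 0 by omega, zpow_zero, mul_one]
      _ = (d k * (2:ℝ≥0∞) ^ (k-2)) * (2:ℝ≥0∞) ^ (2-k) := by ring
      _ ≤ (3 ^ n * ∑' i : Fin n → ℤ, (if (2:ℝ≥0∞) ^ (k-2) < B i then B i else 0))
            * (2:ℝ≥0∞) ^ (2-k) := mul_le_mul_left h2 _
      _ = (2:ℝ≥0∞) ^ (2-k) * (3 ^ n *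
            ∑' i : Fin n → ℤ, (if (2:ℝ≥0∞) ^ (k-2) < B i then B i else 0)) := by ring
  -- Step 3 : swap sums
  set c : ℤ → ℝ≥0∞ := fun k => ((2:ℝ≥0∞) ^ (k+1)) ^ p * (2:ℝ≥0∞) ^ (2-k) with hc
  have step3 : ∑' k : ℤ, ((2:ℝ≥0∞) ^ (k+1)) ^ p * d k
      ≤ 3 ^ n * ∑' i : Fin n → ℤ, ∑' k : ℤ,
          c k * (if (2:ℝ≥0∞) ^ (k-2) < B i then B i else 0) := by
    calc ∑' k : ℤ, ((2:ℝ≥0∞) ^ (k+1)) ^ p * d k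
        ≤ ∑' k : ℤ, ((2:ℝ≥0∞) ^ (k+1)) ^ p * ((2:ℝ≥0∞) ^ (2-k) * (3 ^ n *
            ∑' i : Fin n → ℤ, (if (2:ℝ≥0∞) ^ (k-2) < B i then B i else 0))) :=
          ENNReal.tsum_le_tsum fun k => mul_le_mul_right (step2 k) _
      _ = ∑' k : ℤ, 3 ^ n * ∑' i : Fin n → ℤ,
            c k * (if (2:ℝ≥0∞) ^ (k-2) < B i then B i else 0) := by
          refine tsum_congr fun k => ?_
          rw [ENNReal.tsum_mul_left (a := c k), hc]
          ring
      _ = 3 ^ n * ∑' k : ℤ, ∑' i : Fin n → ℤ,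
            c k * (if (2:ℝ≥0∞) ^ (k-2) < B i then B i else 0) := ENNReal.tsum_mul_left
      _ = 3 ^ n * ∑' i : Fin n → ℤ, ∑' k : ℤ,
            c k * (if (2:ℝ≥0∞) ^ (k-2) < B i then B i else 0) := by rw [ENNReal.tsum_comm]
  -- Step 4 : geometric series estimate for each i
  have step4 : ∀ i : Fin n → ℤ, ∑' k : ℤ,
      c k * (if (2:ℝ≥0∞) ^ (k-2) < B i then B i else 0)
      ≤ ((2:ℝ≥0∞) ^ (3*p) * (1 - (2:ℝ≥0∞) ^ (1-p))⁻¹) * B i ^ p := by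
    intro i
    by_cases hBi : B i = 0
    · have : ∀ k : ℤ, c k * (if (2:ℝ≥0∞) ^ (k-2) < B i then B i else 0) = 0 := by
        intro k
        rw [hBi]
        simp
      rw [tsum_congr this]
      simp
    have hBitop : B i ≠ ∞ := ENNReal.ofReal_ne_top
    obtain ⟨L, hL1, hL2⟩ := ENNReal.exists_mem_Ico_zpow hBi hBitop ENNReal.one_lt_two
      ENNReal.ofNat_ne_top
    set K : ℤ := L + 2 with hK
    have hptw : ∀ k : ℤ, c k * (if (2:ℝ≥0∞) ^ (k-2) < B i then B i else 0)
        ≤ (if k ≤ K then c k else 0) * B i := by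
      intro k
      by_cases h : (2:ℝ≥0∞) ^ (k-2) < B i
      · have hkK : k ≤ K := by
          have := lt_of_pw_lt (h.trans hL2)
          omega
        rw [if_pos h, if_pos hkK]
      · rw [if_neg h, mul_zero]
        exact zero_le
    have hre : ∑' k : ℤ, (if k ≤ K then c k else 0) = ∑' m : ℕ, c (K - m) := by
      have hinj : Function.Injective (fun m : ℕ => K - (m:ℤ)) := by
        intro a b hab
        simpa using hab
      have hsupp : Function.support (fun k : ℤ => if k ≤ K then c k else 0)
          ⊆ Set.range (fun m : ℕ => K - (m:ℤ)) := by
        intro z hz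
        have hzK : z ≤ K := by
          by_contra hzK
          exact hz (if_neg hzK)
        exact ⟨(K - z).toNat, by show K - ((K - z).toNat : ℤ) = z; omega⟩
      have := hinj.tsum_eq (f := fun k : ℤ => if k ≤ K then c k else 0) hsupp
      rw [← this]
      refine tsum_congr fun m => ?_
      exact if_pos (by omega)
    -- identify the geometric series
    have hcK : ∀ m : ℕ, c (K - m) = ((2:ℝ≥0∞) ^ (((K:ℝ)+1)*p + 2 - K)) *
        ((2:ℝ≥0∞) ^ ((1:ℝ)-p)) ^ m := by
      intro m
      simp only [hc]
      rw [← ENNReal.rpow_intCast (2:ℝ≥0∞) (K - m + 1), ← ENNReal.rpow_intCast (2:ℝ≥0∞) (2 - (K - m)),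
        ← ENNReal.rpow_mul, ← ENNReal.rpow_mul_natCast (2:ℝ≥0∞) (1 - p) m,
        ← ENNReal.rpow_add _ _ two_ne_zero ENNReal.ofNat_ne_top,
        ← ENNReal.rpow_add _ _ two_ne_zero ENNReal.ofNat_ne_top]
      congr 1
      push_cast
      ring
    have hgeo : ∑' m : ℕ, c (K - m) = ((2:ℝ≥0∞) ^ (((K:ℝ)+1)*p + 2 - K)) *
        (1 - (2:ℝ≥0∞) ^ ((1:ℝ)-p))⁻¹ := by
      rw [tsum_congr hcK, ENNReal.tsum_mul_left, ENNReal.tsum_geometric]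
    -- bound the constant by `B i`
    have hcst : ((2:ℝ≥0∞) ^ (((K:ℝ)+1)*p + 2 - K)) ≤ (2:ℝ≥0∞) ^ (3*p) * B i ^ (p - 1) := by
      have he : ((K:ℝ)+1)*p + 2 - K = 3*p + (L:ℝ)*(p-1) := by
        rw [hK]
        push_cast
        ring
      rw [he, ENNReal.rpow_add _ _ two_ne_zero ENNReal.ofNat_ne_top]
      refine mul_le_mul_right ?_ _
      have h2L : (2:ℝ≥0∞) ^ ((L:ℝ)*(p-1)) = ((2:ℝ≥0∞) ^ (L:ℤ)) ^ (p-1) := by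
        rw [← ENNReal.rpow_intCast (2:ℝ≥0∞) L, ← ENNReal.rpow_mul]
      rw [h2L]
      exact ENNReal.rpow_le_rpow hL1 (by linarith)
    calc ∑' k : ℤ, c k * (if (2:ℝ≥0∞) ^ (k-2) < B i then B i else 0)
        ≤ ∑' k : ℤ, (if k ≤ K then c k else 0) * B i := ENNReal.tsum_le_tsum hptw
      _ = (∑' k : ℤ, (if k ≤ K then c k else 0)) * B i := ENNReal.tsum_mul_right
      _ = ((2:ℝ≥0∞) ^ (((K:ℝ)+1)*p + 2 - K)) * (1 - (2:ℝ≥0∞) ^ ((1:ℝ)-p))⁻¹ * B i := by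
          rw [hre, hgeo]
      _ ≤ ((2:ℝ≥0∞) ^ (3*p) * B i ^ (p - 1)) * (1 - (2:ℝ≥0∞) ^ ((1:ℝ)-p))⁻¹ * B i :=
          mul_le_mul_left (mul_le_mul_left hcst _) _
      _ = ((2:ℝ≥0∞) ^ (3*p) * (1 - (2:ℝ≥0∞) ^ ((1:ℝ)-p))⁻¹) * (B i ^ (p-1) * B i) := by
          ring
      _ = ((2:ℝ≥0∞) ^ (3*p) * (1 - (2:ℝ≥0∞) ^ (1-p))⁻¹) * B i ^ p := by
          congr 1
          nth_rewrite 2 [← ENNReal.rpow_one (B i)]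
          rw [← ENNReal.rpow_add _ _ hBi hBitop]
          norm_num
  -- assemble
  calc ∑' j : Fin n → ℤ, g j ^ p
      ≤ ∑' k : ℤ, ((2:ℝ≥0∞) ^ (k+1)) ^ p * d k := step1
    _ ≤ 3 ^ n * ∑' i : Fin n → ℤ, ∑' k : ℤ,
          c k * (if (2:ℝ≥0∞) ^ (k-2) < B i then B i else 0) := step3
    _ ≤ 3 ^ n * ∑' i : Fin n → ℤ,
          ((2:ℝ≥0∞) ^ (3*p) * (1 - (2:ℝ≥0∞) ^ (1-p))⁻¹) * B i ^ p :=
        mul_le_mul_right (ENNReal.tsum_le_tsum step4) _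
    _ = 3 ^ n * (((2:ℝ≥0∞) ^ (3*p) * (1 - (2:ℝ≥0∞) ^ (1-p))⁻¹) * ∑' i : Fin n → ℤ, B i ^ p) := by
        rw [ENNReal.tsum_mul_left]
    _ = (3 ^ n * (2:ℝ≥0∞) ^ (3*p) * (1 - (2:ℝ≥0∞) ^ (1-p))⁻¹) * ∑' i : Fin n → ℤ, B i ^ p := by
        ring

end AuxStmt10

/-- the centered discrete fractional maximal operator `M_α` is bounded from
`ℓ^p(ℤⁿ)` into `ℓ^q(ℤⁿ)` for `0 ≤ α < n`, `1 < p < n/α`, `1/q = 1/p - α/n`. -/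
theorem stmt10 (n : ℕ) (α p q : ℝ) (hα : 0 ≤ α) (hαn : α < n)
    (hp : 1 < p) (hpn : α * p < n) (hq : 1 / q = 1 / p - α / n) :
    ∃ C > (0 : ℝ), ∀ b : (Fin n → ℤ) → ℝ,
      elpE q (fracMax α b) ≤ ENNReal.ofReal C * elp p b := by
  have hn : (0:ℝ) < n := lt_of_le_of_lt hα hαn
  have hp0 : (0:ℝ) < p := lt_trans one_pos hp
  have hq0 : (0:ℝ) < 1/q := by
    rw [hq, sub_pos, div_lt_div_iff₀ hn hp0]; linarith
  have hqpos : (0:ℝ) < q := one_div_pos.1 hq0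
  have hqp : p ≤ q := by
    have h1 : 1/q ≤ 1/p := by
      rw [hq]
      have : 0 ≤ α / n := div_nonneg hα hn.le
      linarith
    rwa [div_le_div_iff₀ hqpos hp0, one_mul, one_mul] at h1
  -- the ENNReal constant
  set A : ℝ≥0∞ := 3 ^ n * (2:ℝ≥0∞) ^ (3*p) * (1 - (2:ℝ≥0∞) ^ (1-p))⁻¹ with hA
  have hAtop : A ≠ ∞ := by
    rw [hA]
    have h1 : (3:ℝ≥0∞) ^ n ≠ ∞ := ENNReal.pow_ne_top (by norm_num)
    have h2 : (2:ℝ≥0∞) ^ (3*p) ≠ ∞ :=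
      ENNReal.rpow_ne_top_of_nonneg (by positivity) ENNReal.ofNat_ne_top
    have h3 : (1 - (2:ℝ≥0∞) ^ (1-p))⁻¹ ≠ ∞ := by
      rw [Ne, ENNReal.inv_eq_top, tsub_eq_zero_iff_le]
      intro hcon
      have : (2:ℝ≥0∞) ^ (1-p) < 1 := by
        calc (2:ℝ≥0∞) ^ (1-p) < (2:ℝ≥0∞) ^ (0:ℝ) :=
              ENNReal.rpow_lt_rpow_of_exponent_lt ENNReal.one_lt_two ENNReal.ofNat_ne_top
                (by linarith)
          _ = 1 := ENNReal.rpow_zero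
      exact absurd hcon (not_le.2 this)
    exact ENNReal.mul_ne_top (ENNReal.mul_ne_top h1 h2) h3
  have hA1q : A ^ (1/q) ≠ ∞ := ENNReal.rpow_ne_top_of_nonneg hq0.le hAtop
  refine ⟨(A ^ (1/q)).toReal + 1, by positivity, fun b => ?_⟩
  have hCge : A ^ (1/q) ≤ ENNReal.ofReal ((A ^ (1/q)).toReal + 1) := by
    calc A ^ (1/q) = ENNReal.ofReal ((A ^ (1/q)).toReal) := (ENNReal.ofReal_toReal hA1q).symm
      _ ≤ ENNReal.ofReal ((A ^ (1/q)).toReal + 1) := ENNReal.ofReal_le_ofReal (by linarith)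
  set N := ∑' i : Fin n → ℤ, ENNReal.ofReal |b i| ^ p with hN
  by_cases hNtop : N = ∞
  · -- RHS is infinite
    have h1 : elp p b = ∞ := by
      rw [elp, ← hN, hNtop]
      exact ENNReal.top_rpow_of_pos (one_div_pos.2 hp0)
    rw [h1, ENNReal.mul_top (ENNReal.ofReal_pos.2 (by positivity)).ne']
    exact le_top
  -- pointwise bound raised to the q-th power
  have hptq : ∀ j, fracMax α b j ^ q ≤ (fracMax 0 b j) ^ p * N ^ (q/p - 1) := by
    intro j
    have h1 := ENNReal.rpow_le_rpow (pointwise_interp α p q hn hα hp hpn hq b j) hqpos.le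
    rw [ENNReal.mul_rpow_of_nonneg _ _ hqpos.le, ← ENNReal.rpow_mul, ← ENNReal.rpow_mul] at h1
    rw [div_mul_cancel₀ _ (ne_of_gt hqpos),
      show (1/p) * (1 - p/q) * q = q/p - 1 from by field_simp] at h1
    exact h1
  calc elpE q (fracMax α b)
      ≤ (∑' j : Fin n → ℤ, (fracMax 0 b j) ^ p * N ^ (q/p - 1)) ^ (1/q) := by
        rw [elpE]
        exact ENNReal.rpow_le_rpow (ENNReal.tsum_le_tsum hptq) hq0.le
    _ = ((∑' j : Fin n → ℤ, (fracMax 0 b j) ^ p) * N ^ (q/p - 1)) ^ (1/q) := by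
        rw [ENNReal.tsum_mul_right]
    _ ≤ ((A * N) * N ^ (q/p - 1)) ^ (1/q) := by
        exact ENNReal.rpow_le_rpow (mul_le_mul_left
          (strong_type p hp b (hN ▸ hNtop)) _) hq0.le
    _ = (A * N ^ (q/p)) ^ (1/q) := by
        congr 1
        rw [mul_assoc]
        congr 1
        nth_rewrite 1 [← ENNReal.rpow_one N]
        rw [← ENNReal.rpow_add_of_nonneg _ _ zero_le_one (by
          rw [sub_nonneg, le_div_iff₀ hp0, one_mul]; exact hqp)]
        congr 1
        ring
    _ = A ^ (1/q) * N ^ ((q/p) * (1/q)) := by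
        rw [ENNReal.mul_rpow_of_nonneg _ _ hq0.le, ← ENNReal.rpow_mul]
    _ = A ^ (1/q) * N ^ (1/p) := by
        rw [show (q/p) * (1/q) = 1/p from by field_simp]
    _ ≤ ENNReal.ofReal ((A ^ (1/q)).toReal + 1) * elp p b := by
        rw [elp, ← hN]
        exact mul_le_mul_left hCge _
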